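/- arXiv:2211.04918 — 2 statements merged into one kernel-verified Lean document; each statement's English description precedes it below -/
import Mathlib

section
/- (Davis–Kahan-type projection bound) Let Σ and Σ̂ be p×p real symmetric matrices with eigenvalues λ₁ ≥ … ≥ λ_p and λ̂₁ ≥ … ≥ λ̂_p respectively, and suppose λ_k > λ_{k+1} = 0 (i.e., Σ has rank k). Let P and P̂ be the orthogonal projections onto the span of the top-k eigenvectors of Σ and Σ̂ respectively. Then ‖P̂ − P‖² ≤ 4k‖Σ̂ − Σ‖²/λ_k². -/
open Matrix

/-- The ℓ²→ℓ² operator norm of a real matrix. -/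
noncomputable def opNorm {m n : ℕ} (A : Matrix (Fin m) (Fin n) ℝ) : ℝ :=
  ‖LinearMap.toContinuousLinearMap (Matrix.toEuclideanLin A)‖

/-! ### Auxiliary material for the Davis–Kahan bound -/

/-- Euclidean norm of a vector given by a plain function. -/
noncomputable def euNorm {n : ℕ} (x : Fin n → ℝ) : ℝ := Real.sqrt (x ⬝ᵥ x)

lemma dp_self_nonneg {n : ℕ} (x : Fin n → ℝ) : 0 ≤ x ⬝ᵥ x :=
  Finset.sum_nonneg fun i _ => mul_self_nonneg (x i)

lemma euNorm_nonneg {n : ℕ} (x : Fin n → ℝ) : 0 ≤ euNorm x := Real.sqrt_nonneg _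

lemma euNorm_sq {n : ℕ} (x : Fin n → ℝ) : euNorm x ^ 2 = x ⬝ᵥ x := by
  rw [euNorm, Real.sq_sqrt (dp_self_nonneg x)]

lemma euNorm_eq {n : ℕ} (y : Fin n → ℝ) :
    euNorm y = ‖(WithLp.equiv 2 (Fin n → ℝ)).symm y‖ := by
  rw [EuclideanSpace.norm_eq]
  simp [euNorm, dotProduct, Real.norm_eq_abs, sq_abs, sq]

lemma opNorm_mulVec_le {m n : ℕ} (A : Matrix (Fin m) (Fin n) ℝ) (x : Fin n → ℝ) :
    euNorm (A *ᵥ x) ≤ opNorm A * euNorm x := by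
  rw [euNorm_eq, euNorm_eq]
  have h := (LinearMap.toContinuousLinearMap (Matrix.toEuclideanLin A)).le_opNorm
    ((WithLp.equiv 2 (Fin n → ℝ)).symm x)
  simpa [Matrix.toEuclideanLin_toLp, Matrix.toEuclideanLin_apply, Matrix.toLin'_apply, opNorm] using h

lemma opNorm_le {m n : ℕ} (A : Matrix (Fin m) (Fin n) ℝ) {C : ℝ} (hC : 0 ≤ C)
    (h : ∀ x, euNorm (A *ᵥ x) ≤ C * euNorm x) : opNorm A ≤ C := by
  apply ContinuousLinearMap.opNorm_le_bound _ hC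
  intro x
  have := h ((WithLp.equiv 2 (Fin n → ℝ)) x)
  rw [euNorm_eq, euNorm_eq] at this
  simpa [Matrix.toEuclideanLin_toLp, Matrix.toEuclideanLin_apply, Matrix.toLin'_apply] using this

lemma opNorm_nonneg' {m n : ℕ} (A : Matrix (Fin m) (Fin n) ℝ) : 0 ≤ opNorm A :=
  norm_nonneg _

lemma dp_adj {m n : ℕ} (A : Matrix (Fin m) (Fin n) ℝ) (x : Fin n → ℝ) (y : Fin m → ℝ) :
    (A *ᵥ x) ⬝ᵥ y = x ⬝ᵥ (Aᵀ *ᵥ y) := by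
  rw [dotProduct_comm, dotProduct_mulVec, ← mulVec_transpose, dotProduct_comm]

lemma dp_cs {n : ℕ} (x y : Fin n → ℝ) : |x ⬝ᵥ y| ≤ euNorm x * euNorm y := by
  have h := Finset.sum_mul_sq_le_sq_mul_sq Finset.univ x y
  have h2 : (x ⬝ᵥ y) ^ 2 ≤ (x ⬝ᵥ x) * (y ⬝ᵥ y) := by
    simpa [dotProduct, sq, mul_comm, mul_left_comm, mul_assoc] using h
  have h3 := Real.sqrt_le_sqrt h2
  rwa [Real.sqrt_sq_eq_abs, Real.sqrt_mul (dp_self_nonneg x), ← euNorm, ← euNorm] at h3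

lemma dp_self_pos {n : ℕ} {x : Fin n → ℝ} (hx : x ≠ 0) : 0 < x ⬝ᵥ x := by
  have hnn : (0:ℝ) ≤ x ⬝ᵥ x := dp_self_nonneg x
  rcases hnn.lt_or_eq with h | h
  · exact h
  · exfalso
    apply hx
    funext i
    have := (Finset.sum_eq_zero_iff_of_nonneg (fun i _ => mul_self_nonneg (x i))).mp h.symm
    exact mul_self_eq_zero.mp (this i (Finset.mem_univ i))

lemma exists_ker {r s : ℕ} (h : r < s) (M : Matrix (Fin r) (Fin s) ℝ) :
    ∃ c : Fin s → ℝ, c ≠ 0 ∧ M *ᵥ c = 0 := by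
  by_contra hc
  push_neg at hc
  have hinj : Function.Injective (Matrix.mulVecLin M) := by
    rw [← LinearMap.ker_eq_bot, LinearMap.ker_eq_bot']
    intro c hc0
    by_contra hne
    exact hc c hne hc0
  have := LinearMap.finrank_le_finrank_of_injective hinj
  rw [Module.finrank_fin_fun, Module.finrank_fin_fun] at this
  omega

lemma ite_sum {s p : ℕ} (hsp : s ≤ p) (c : Fin s → ℝ) (j : Fin p) :
    (∑ b : Fin s, (if j = Fin.castLE hsp b then 1 else 0) * c b)
      = if h : (j : ℕ) < s then c ⟨j, h⟩ else 0 := by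
  split
  case isTrue h =>
    rw [Finset.sum_eq_single (⟨(j : ℕ), h⟩ : Fin s)]
    · have : j = Fin.castLE hsp ⟨(j : ℕ), h⟩ := by ext; rfl
      rw [if_pos this, one_mul]
    · intro b _ hb
      rw [if_neg, zero_mul]
      intro hcontra
      exact hb (by ext; exact (congrArg Fin.val hcontra).symm)
    · intro hmem; exact absurd (Finset.mem_univ _) hmem
  case isFalse h =>
    apply Finset.sum_eq_zero
    intro b _
    rw [if_neg, zero_mul]
    intro hcontra
    apply h
    rw [hcontra]
    exact b.isLt

lemma spectral_sum {p : ℕ} (V : Matrix (Fin p) (Fin p) ℝ) (lam : Fin p → ℝ)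
    (w : Fin p → ℝ) :
    w ⬝ᵥ ((V * Matrix.diagonal lam * Vᵀ) *ᵥ w)
      = ∑ j, lam j * ((Vᵀ *ᵥ w) j) ^ 2 := by
  rw [← mulVec_mulVec, ← mulVec_mulVec]
  rw [dotProduct_comm, dp_adj]
  simp only [dotProduct, mulVec_diagonal]
  exact Finset.sum_congr rfl fun j _ => by ring

lemma dp_iso {p : ℕ} (V : Matrix (Fin p) (Fin p) ℝ) (hV : Vᵀ * V = 1) (w : Fin p → ℝ) :
    (Vᵀ *ᵥ w) ⬝ᵥ (Vᵀ *ᵥ w) = w ⬝ᵥ w := by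
  rw [dotProduct_comm, dp_adj, transpose_transpose, mulVec_mulVec,
    mul_eq_one_comm.mp hV, one_mulVec]

lemma quad_le {p : ℕ} (V : Matrix (Fin p) (Fin p) ℝ) (lam : Fin p → ℝ)
    (hV : Vᵀ * V = 1) (w : Fin p → ℝ) (cond : Fin p → Prop) [DecidablePred cond] (B : ℝ)
    (hz : ∀ j, ¬ cond j → (Vᵀ *ᵥ w) j = 0) (hb : ∀ j, cond j → lam j ≤ B) :
    w ⬝ᵥ ((V * Matrix.diagonal lam * Vᵀ) *ᵥ w) ≤ B * (w ⬝ᵥ w) := by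
  rw [spectral_sum, ← dp_iso V hV w]
  have h : (Vᵀ *ᵥ w) ⬝ᵥ (Vᵀ *ᵥ w) = ∑ j, ((Vᵀ *ᵥ w) j) ^ 2 := by
    simp [dotProduct, sq]
  rw [h, Finset.mul_sum]
  apply Finset.sum_le_sum
  intro j _
  by_cases hc : cond j
  · exact mul_le_mul_of_nonneg_right (hb j hc) (sq_nonneg _)
  · rw [hz j hc]; simp

lemma quad_ge {p : ℕ} (V : Matrix (Fin p) (Fin p) ℝ) (lam : Fin p → ℝ)
    (hV : Vᵀ * V = 1) (w : Fin p → ℝ) (cond : Fin p → Prop) [DecidablePred cond] (B : ℝ)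
    (hz : ∀ j, ¬ cond j → (Vᵀ *ᵥ w) j = 0) (hb : ∀ j, cond j → B ≤ lam j) :
    B * (w ⬝ᵥ w) ≤ w ⬝ᵥ ((V * Matrix.diagonal lam * Vᵀ) *ᵥ w) := by
  rw [spectral_sum, ← dp_iso V hV w]
  have h : (Vᵀ *ᵥ w) ⬝ᵥ (Vᵀ *ᵥ w) = ∑ j, ((Vᵀ *ᵥ w) j) ^ 2 := by
    simp [dotProduct, sq]
  rw [h, Finset.mul_sum]
  apply Finset.sum_le_sum
  intro j _
  by_cases hc : cond j
  · exact mul_le_mul_of_nonneg_right (hb j hc) (sq_nonneg _)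
  · rw [hz j hc]; simp

/-- One-sided Weyl inequality obtained by a dimension-counting argument. -/
lemma weyl_upper {p : ℕ} (V Vh : Matrix (Fin p) (Fin p) ℝ) (lam lamh : Fin p → ℝ)
    (hV : Vᵀ * V = 1) (hVh : Vhᵀ * Vh = 1) (hlam : Antitone lam) (hlamh : Antitone lamh)
    (ε : ℝ)
    (hE : ∀ u : Fin p → ℝ, u ⬝ᵥ ((Vh * Matrix.diagonal lamh * Vhᵀ) *ᵥ u)
        ≤ u ⬝ᵥ ((V * Matrix.diagonal lam * Vᵀ) *ᵥ u) + ε * (u ⬝ᵥ u))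
    (r : Fin p) : lamh r ≤ lam r + ε := by
  set t := (r : ℕ) with ht
  have ht1 : t + 1 ≤ p := r.isLt
  have htp : t ≤ p := Nat.le_of_succ_le ht1
  set M : Matrix (Fin t) (Fin (t + 1)) ℝ :=
    Matrix.of (fun a b => (Vᵀ * Vh) (Fin.castLE htp a) (Fin.castLE ht1 b)) with hM
  obtain ⟨c, hc0, hcK⟩ := exists_ker (Nat.lt_succ_self t) M
  set Vh' : Matrix (Fin p) (Fin (t + 1)) ℝ :=
    Matrix.of (fun i b => Vh i (Fin.castLE ht1 b)) with hVh'
  set u : Fin p → ℝ := Vh' *ᵥ c with hu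
  have hMul : Vhᵀ * Vh' = Matrix.of fun j (b : Fin (t+1)) =>
      if j = Fin.castLE ht1 b then (1:ℝ) else 0 := by
    ext j b
    have h1 : (Vhᵀ * Vh') j b = (Vhᵀ * Vh) j (Fin.castLE ht1 b) := by
      simp [Matrix.mul_apply, hVh', Matrix.transpose_apply]
    rw [h1, hVh]
    simp [Matrix.one_apply]
  have hVhu : ∀ j : Fin p, (Vhᵀ *ᵥ u) j
      = if h : (j : ℕ) < t + 1 then c ⟨j, h⟩ else 0 := by
    intro j
    rw [hu, mulVec_mulVec, hMul]
    show (∑ b, (if j = Fin.castLE ht1 b then (1:ℝ) else 0) * c b) = _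
    exact ite_sum ht1 c j
  have hVu : ∀ j : Fin p, (j : ℕ) < t → (Vᵀ *ᵥ u) j = 0 := by
    intro j hj
    have h1 : (Vᵀ *ᵥ u) j = (M *ᵥ c) ⟨j, hj⟩ := by
      rw [hu, mulVec_mulVec]
      have hMul2 : ∀ b, M ⟨(j:ℕ), hj⟩ b = (Vᵀ * Vh') j b := by
        intro b
        have hjj : Fin.castLE htp ⟨(j:ℕ), hj⟩ = j := by ext; rfl
        simp only [hM, Matrix.of_apply, hjj]
        simp [Matrix.mul_apply, hVh', Matrix.transpose_apply]
      show ((Vᵀ * Vh') *ᵥ c) j = _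
      simp [Matrix.mulVec, dotProduct, hMul2]
    rw [h1, hcK]
    rfl
  have hu0 : u ≠ 0 := by
    intro h0
    apply hc0
    funext b
    have hb2 := hVhu (Fin.castLE ht1 b)
    rw [h0, mulVec_zero] at hb2
    have hb : ((Fin.castLE ht1 b : Fin p) : ℕ) < t + 1 := b.isLt
    rw [dif_pos hb] at hb2
    exact hb2.symm
  have hq : 0 < u ⬝ᵥ u := dp_self_pos hu0
  have hSh_ge : lamh r * (u ⬝ᵥ u) ≤ u ⬝ᵥ ((Vh * Matrix.diagonal lamh * Vhᵀ) *ᵥ u) := by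
    refine quad_ge Vh lamh hVh u (fun j => (j : ℕ) < t + 1) (lamh r) ?_ ?_
    · intro j hj
      rw [hVhu j, dif_neg hj]
    · intro j hj
      exact hlamh (by rw [Fin.le_def]; omega)
  have hS_le : u ⬝ᵥ ((V * Matrix.diagonal lam * Vᵀ) *ᵥ u) ≤ lam r * (u ⬝ᵥ u) := by
    refine quad_le V lam hV u (fun j => t ≤ (j : ℕ)) (lam r) ?_ ?_
    · intro j hj
      exact hVu j (by omega)
    · intro j hj
      exact hlam (by rw [Fin.le_def]; omega)
  have hEu := hE u
  have hfin : lamh r * (u ⬝ᵥ u) ≤ (lam r + ε) * (u ⬝ᵥ u) := by nlinarith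
  exact le_of_mul_le_mul_right hfin hq

section alg
variable {p k : ℕ} (hkp : k < p) (W : Matrix (Fin p) (Fin p) ℝ)
  (Wk : Matrix (Fin p) (Fin k) ℝ)

/-- The inclusion matrix of the first `k` coordinates. -/
def iota (hkp : k < p) : Matrix (Fin p) (Fin k) ℝ :=
  Matrix.of fun i j => if i = Fin.castLE hkp.le j then (1:ℝ) else 0

lemma hWtWk (hW : Wᵀ * W = 1)
    (hWk : Wk = Matrix.of fun i (j : Fin k) => W i (Fin.castLE hkp.le j)) :
    Wᵀ * Wk = iota hkp := by
  ext i j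
  have h : (Wᵀ * Wk) i j = (Wᵀ * W) i (Fin.castLE hkp.le j) := by
    simp [Matrix.mul_apply, hWk, Matrix.transpose_apply]
  rw [h, hW, iota]
  simp [Matrix.one_apply]

lemma hWiota (hWk : Wk = Matrix.of fun i (j : Fin k) => W i (Fin.castLE hkp.le j)) :
    W * iota hkp = Wk := by
  ext i j
  simp [Matrix.mul_apply, iota, hWk]

lemma hDiota (nu : Fin p → ℝ) :
    Matrix.diagonal nu * iota hkp
      = iota hkp * Matrix.diagonal (fun j : Fin k => nu (Fin.castLE hkp.le j)) := by
  ext i j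
  rw [Matrix.diagonal_mul, Matrix.mul_diagonal]
  simp only [iota, Matrix.of_apply]
  by_cases h : i = Fin.castLE hkp.le j
  · subst h; simp
  · simp [h]

lemma hWkWk (hW : Wᵀ * W = 1)
    (hWk : Wk = Matrix.of fun i (j : Fin k) => W i (Fin.castLE hkp.le j)) :
    Wkᵀ * Wk = 1 := by
  ext i j
  have h : (Wkᵀ * Wk) i j = (Wᵀ * W) (Fin.castLE hkp.le i) (Fin.castLE hkp.le j) := by
    simp [Matrix.mul_apply, hWk, Matrix.transpose_apply]
  rw [h, hW]
  simp [Matrix.one_apply, Fin.castLE_inj]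

lemma hQidem (hW : Wᵀ * W = 1)
    (hWk : Wk = Matrix.of fun i (j : Fin k) => W i (Fin.castLE hkp.le j)) :
    (Wk * Wkᵀ) * (Wk * Wkᵀ) = Wk * Wkᵀ := by
  calc (Wk * Wkᵀ) * (Wk * Wkᵀ) = Wk * (Wkᵀ * Wk) * Wkᵀ := by
        simp only [Matrix.mul_assoc]
    _ = Wk * Wkᵀ := by rw [hWkWk hkp W Wk hW hWk]; simp

lemma hBQ (hW : Wᵀ * W = 1)
    (hWk : Wk = Matrix.of fun i (j : Fin k) => W i (Fin.castLE hkp.le j)) (nu : Fin p → ℝ) :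
    (W * Matrix.diagonal nu * Wᵀ) * (Wk * Wkᵀ)
      = Wk * Matrix.diagonal (fun j : Fin k => nu (Fin.castLE hkp.le j)) * Wkᵀ := by
  calc (W * Matrix.diagonal nu * Wᵀ) * (Wk * Wkᵀ)
      = W * Matrix.diagonal nu * (Wᵀ * Wk) * Wkᵀ := by simp only [Matrix.mul_assoc]
    _ = W * (Matrix.diagonal nu * iota hkp) * Wkᵀ := by
        rw [hWtWk hkp W Wk hW hWk]; simp only [Matrix.mul_assoc]
    _ = (W * iota hkp) * Matrix.diagonal (fun j : Fin k => nu (Fin.castLE hkp.le j)) * Wkᵀ := by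
        rw [hDiota]; simp only [Matrix.mul_assoc]
    _ = _ := by rw [hWiota hkp W Wk hWk]

lemma hcomm (hW : Wᵀ * W = 1)
    (hWk : Wk = Matrix.of fun i (j : Fin k) => W i (Fin.castLE hkp.le j)) (nu : Fin p → ℝ) :
    (W * Matrix.diagonal nu * Wᵀ) * (Wk * Wkᵀ)
      = (Wk * Wkᵀ) * (W * Matrix.diagonal nu * Wᵀ) := by
  have h1 := hBQ hkp W Wk hW hWk nu
  have h2 : ((W * Matrix.diagonal nu * Wᵀ) * (Wk * Wkᵀ))ᵀ
      = (Wk * Wkᵀ) * (W * Matrix.diagonal nu * Wᵀ) := by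
    rw [Matrix.transpose_mul]
    congr 1 <;> simp [Matrix.transpose_mul, Matrix.mul_assoc]
  rw [← h2, h1]
  simp [Matrix.transpose_mul, Matrix.mul_assoc]

lemma hWw (hW : Wᵀ * W = 1)
    (hWk : Wk = Matrix.of fun i (j : Fin k) => W i (Fin.castLE hkp.le j))
    (v : Fin p → ℝ) (j : Fin p) (hj : (j : ℕ) < k) :
    (Wᵀ *ᵥ (v - (Wk * Wkᵀ) *ᵥ v)) j = 0 := by
  rw [mulVec_sub]
  have h1 : Wᵀ *ᵥ ((Wk * Wkᵀ) *ᵥ v) = (iota hkp) *ᵥ (Wkᵀ *ᵥ v) := by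
    rw [mulVec_mulVec, mulVec_mulVec, ← Matrix.mul_assoc, hWtWk hkp W Wk hW hWk,
      ← mulVec_mulVec]
  rw [Pi.sub_apply, h1]
  have h2 : ((iota hkp) *ᵥ (Wkᵀ *ᵥ v)) j
      = if h : (j : ℕ) < k then (Wkᵀ *ᵥ v) ⟨j, h⟩ else 0 := by
    show (∑ b, (if j = Fin.castLE hkp.le b then (1:ℝ) else 0) * (Wkᵀ *ᵥ v) b) = _
    exact ite_sum hkp.le (Wkᵀ *ᵥ v) j
  rw [h2, dif_pos hj]
  have h3 : (Wkᵀ *ᵥ v) ⟨(j : ℕ), hj⟩ = (Wᵀ *ᵥ v) j := by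
    have h4 : ∀ i, Wk i ⟨(j : ℕ), hj⟩ = W i j := by
      intro i
      rw [hWk]
      rfl
    simp [Matrix.mulVec, dotProduct, Matrix.transpose_apply, h4]
  rw [h3, sub_self]

end alg

/-- Per-column Davis–Kahan bound. -/
lemma col_bound {p k : ℕ} (hkp : k < p) (W : Matrix (Fin p) (Fin p) ℝ) (nu : Fin p → ℝ)
    (hW : Wᵀ * W = 1) (Wk : Matrix (Fin p) (Fin k) ℝ)
    (hWk : Wk = Matrix.of fun i (j : Fin k) => W i (Fin.castLE hkp.le j))
    (A : Matrix (Fin p) (Fin p) ℝ) (v : Fin p → ℝ) (lv : ℝ)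
    (hAv : A *ᵥ v = lv • v) (hv1 : v ⬝ᵥ v = 1)
    (β ε : ℝ) (hε : 0 ≤ ε)
    (hnu : ∀ j : Fin p, k ≤ (j : ℕ) → nu j ≤ β)
    (hEbound : ∀ x y : Fin p → ℝ,
      |x ⬝ᵥ ((A - W * Matrix.diagonal nu * Wᵀ) *ᵥ y)| ≤ ε * euNorm x * euNorm y)
    (hpos : 0 < lv - β) :
    euNorm (v - (Wk * Wkᵀ) *ᵥ v) ≤ ε / (lv - β) := by
  set B := W * Matrix.diagonal nu * Wᵀ with hB
  set Q := Wk * Wkᵀ with hQ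
  set w := v - Q *ᵥ v with hw
  have hQsym : Qᵀ = Q := by
    rw [hQ, Matrix.transpose_mul, Matrix.transpose_transpose]
  have hQw : Q *ᵥ w = 0 := by
    rw [hw, mulVec_sub, mulVec_mulVec, hQidem hkp W Wk hW hWk, sub_self]
  have hwQz : ∀ z : Fin p → ℝ, w ⬝ᵥ (Q *ᵥ z) = 0 := by
    intro z
    rw [dotProduct_comm, dp_adj, hQsym, hQw, dotProduct_zero]
  have hBvw : w ⬝ᵥ (B *ᵥ v) = w ⬝ᵥ (B *ᵥ w) := by
    have hd : B *ᵥ v - B *ᵥ w = B *ᵥ (Q *ᵥ v) := by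
      rw [hw, mulVec_sub, sub_sub_cancel]
    have h0 : w ⬝ᵥ (B *ᵥ (Q *ᵥ v)) = 0 := by
      rw [mulVec_mulVec, hcomm hkp W Wk hW hWk nu, ← mulVec_mulVec]
      exact hwQz _
    have h5 := congrArg (fun z => w ⬝ᵥ z) hd
    simp only [dotProduct_sub] at h5
    linarith
  have hwv : w ⬝ᵥ v = w ⬝ᵥ w := by
    have h1 : v - w = Q *ᵥ v := by rw [hw, sub_sub_cancel]
    have h2 : w ⬝ᵥ (v - w) = 0 := by rw [h1]; exact hwQz v
    rw [dotProduct_sub] at h2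
    linarith
  have hBw : w ⬝ᵥ (B *ᵥ w) ≤ β * (w ⬝ᵥ w) := by
    refine quad_le W nu hW w (fun j => k ≤ (j : ℕ)) β ?_ hnu
    intro j hj
    exact hWw hkp W Wk hW hWk v j (by omega)
  have h1 : w ⬝ᵥ (A *ᵥ v) = lv * (w ⬝ᵥ v) := by
    rw [hAv, dotProduct_smul, smul_eq_mul]
  have h2 : w ⬝ᵥ (A *ᵥ v) = w ⬝ᵥ (B *ᵥ v) + w ⬝ᵥ ((A - B) *ᵥ v) := by
    rw [sub_mulVec, dotProduct_sub]; ring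
  have h4 : euNorm v = 1 := by rw [euNorm, hv1, Real.sqrt_one]
  have h5 : w ⬝ᵥ ((A - B) *ᵥ v) ≤ ε * euNorm w := by
    have h3 := le_of_abs_le (hEbound w v)
    rw [h4, mul_one] at h3
    exact h3
  have e0 : lv * (w ⬝ᵥ w) = lv * (w ⬝ᵥ v) := by rw [hwv]
  have hmain : (lv - β) * (w ⬝ᵥ w) ≤ ε * euNorm w := by
    rw [hBvw] at h2
    nlinarith [hBw]
  have hn : 0 ≤ euNorm w := euNorm_nonneg w
  have hsq : euNorm w ^ 2 = w ⬝ᵥ w := euNorm_sq w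
  rcases hn.eq_or_lt with h | h
  · rw [← h]
    exact div_nonneg hε hpos.le
  · rw [le_div_iff₀ hpos]
    rw [← hsq] at hmain
    nlinarith
lemma euNorm_eq_sqrt_sq {n : ℕ} (x : Fin n → ℝ) : euNorm x = Real.sqrt (euNorm x ^ 2) := by
  rw [Real.sqrt_sq (euNorm_nonneg x)]

lemma euNorm_le_of_sq_le_sq {n m : ℕ} (x : Fin n → ℝ) (y : Fin m → ℝ) (t : ℝ) (ht : 0 ≤ t)
    (h : x ⬝ᵥ x ≤ t ^ 2 * (y ⬝ᵥ y)) : euNorm x ≤ t * euNorm y := by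
  rw [euNorm_eq_sqrt_sq x]
  have h2 : euNorm x ^ 2 ≤ (t * euNorm y) ^ 2 := by
    rw [euNorm_sq, mul_pow, euNorm_sq]; exact h
  calc Real.sqrt (euNorm x ^ 2) ≤ Real.sqrt ((t * euNorm y) ^ 2) := Real.sqrt_le_sqrt h2
    _ = t * euNorm y := Real.sqrt_sq (mul_nonneg ht (euNorm_nonneg y))

lemma proj_key {p : ℕ} (Q : Matrix (Fin p) (Fin p) ℝ) (hQsym : Qᵀ = Q) (hQi : Q * Q = Q)
    (x : Fin p → ℝ) : (Q *ᵥ x) ⬝ᵥ (Q *ᵥ x) = x ⬝ᵥ (Q *ᵥ x) := by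
  rw [dp_adj, mulVec_mulVec, hQsym, hQi]

lemma proj_pyth {p : ℕ} (Q : Matrix (Fin p) (Fin p) ℝ) (hQsym : Qᵀ = Q) (hQi : Q * Q = Q)
    (x : Fin p → ℝ) :
    (Q *ᵥ x) ⬝ᵥ (Q *ᵥ x) + (x - Q *ᵥ x) ⬝ᵥ (x - Q *ᵥ x) = x ⬝ᵥ x := by
  have hk := proj_key Q hQsym hQi x
  have he : (x - Q *ᵥ x) ⬝ᵥ (x - Q *ᵥ x)
      = x ⬝ᵥ x - x ⬝ᵥ (Q *ᵥ x) - (Q *ᵥ x) ⬝ᵥ x + (Q *ᵥ x) ⬝ᵥ (Q *ᵥ x) := by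
    rw [dotProduct_sub, sub_dotProduct, sub_dotProduct]; ring
  have hc : (Q *ᵥ x) ⬝ᵥ x = x ⬝ᵥ (Q *ᵥ x) := dotProduct_comm _ _
  linarith

lemma proj_contract1 {p : ℕ} (Q : Matrix (Fin p) (Fin p) ℝ) (hQsym : Qᵀ = Q)
    (hQi : Q * Q = Q) (x : Fin p → ℝ) : euNorm (Q *ᵥ x) ≤ euNorm x := by
  have h := proj_pyth Q hQsym hQi x
  have := euNorm_le_of_sq_le_sq (Q *ᵥ x) x 1 zero_le_one
    (by rw [one_pow, one_mul]; linarith [dp_self_nonneg (x - Q *ᵥ x)])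
  simpa using this

lemma proj_contract2 {p : ℕ} (Q : Matrix (Fin p) (Fin p) ℝ) (hQsym : Qᵀ = Q)
    (hQi : Q * Q = Q) (x : Fin p → ℝ) : euNorm (x - Q *ᵥ x) ≤ euNorm x := by
  have h := proj_pyth Q hQsym hQi x
  have := euNorm_le_of_sq_le_sq (x - Q *ᵥ x) x 1 zero_le_one
    (by rw [one_pow, one_mul]; linarith [dp_self_nonneg (Q *ᵥ x)])
  simpa using this

lemma euNorm_add_le {n : ℕ} (x y : Fin n → ℝ) : euNorm (x + y) ≤ euNorm x + euNorm y := by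
  have h1 : (x + y) ⬝ᵥ (x + y) = x ⬝ᵥ x + 2 * (x ⬝ᵥ y) + y ⬝ᵥ y := by
    rw [dotProduct_add, add_dotProduct, add_dotProduct, dotProduct_comm y x]; ring
  have h2 : x ⬝ᵥ y ≤ euNorm x * euNorm y := le_of_abs_le (dp_cs x y)
  have h3 : (x + y) ⬝ᵥ (x + y) ≤ (euNorm x + euNorm y) ^ 2 := by
    rw [add_sq, euNorm_sq, euNorm_sq]; linarith
  rw [euNorm]
  calc Real.sqrt ((x + y) ⬝ᵥ (x + y)) ≤ Real.sqrt ((euNorm x + euNorm y) ^ 2) :=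
      Real.sqrt_le_sqrt h3
    _ = euNorm x + euNorm y :=
      Real.sqrt_sq (add_nonneg (euNorm_nonneg x) (euNorm_nonneg y))

lemma euNorm_zero {n : ℕ} : euNorm (0 : Fin n → ℝ) = 0 := by
  rw [euNorm, zero_dotProduct, Real.sqrt_zero]

lemma euNorm_smul {n : ℕ} (a : ℝ) (x : Fin n → ℝ) : euNorm (a • x) = |a| * euNorm x := by
  have h1 : (a • x) ⬝ᵥ (a • x) = a ^ 2 * (x ⬝ᵥ x) := by
    rw [smul_dotProduct, dotProduct_smul, smul_eq_mul, smul_eq_mul]; ring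
  rw [euNorm, h1, Real.sqrt_mul (sq_nonneg a), Real.sqrt_sq_eq_abs, euNorm]

lemma euNorm_sum_le {n : ℕ} {ι : Type*} (s : Finset ι) (f : ι → (Fin n → ℝ)) :
    euNorm (∑ j ∈ s, f j) ≤ ∑ j ∈ s, euNorm (f j) := by
  induction s using Finset.cons_induction with
  | empty => simp [euNorm_zero]
  | cons a s ha ih =>
    rw [Finset.sum_cons, Finset.sum_cons]
    exact le_trans (euNorm_add_le _ _) (by linarith [ih])

lemma mulVec_eq_sum_cols {p k : ℕ} (N : Matrix (Fin p) (Fin k) ℝ) (c : Fin k → ℝ) :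
    N *ᵥ c = ∑ j, c j • (fun i => N i j) := by
  funext i
  simp [Matrix.mulVec, dotProduct, Finset.sum_apply, mul_comm]

lemma abs_sum_le_sqrt {k : ℕ} (c : Fin k → ℝ) :
    ∑ j, |c j| ≤ Real.sqrt k * euNorm c := by
  have hcs := Finset.sum_mul_sq_le_sq_mul_sq Finset.univ (fun _ => (1:ℝ)) (fun j => |c j|)
  have hdc : c ⬝ᵥ c = ∑ j, c j ^ 2 := by simp [dotProduct, sq]
  have h1 : (∑ j, |c j|) ^ 2 ≤ (k : ℝ) * (c ⬝ᵥ c) := by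
    rw [hdc]
    simpa using hcs
  have h2 : ∑ j, |c j| = Real.sqrt ((∑ j, |c j|) ^ 2) :=
    (Real.sqrt_sq (Finset.sum_nonneg fun j _ => abs_nonneg _)).symm
  rw [h2]
  calc Real.sqrt ((∑ j, |c j|) ^ 2) ≤ Real.sqrt ((k : ℝ) * (c ⬝ᵥ c)) := Real.sqrt_le_sqrt h1
    _ = Real.sqrt k * euNorm c := by rw [Real.sqrt_mul (Nat.cast_nonneg k), euNorm]

lemma colsum_bound {p k : ℕ} (N : Matrix (Fin p) (Fin k) ℝ) (t : ℝ) (ht : 0 ≤ t)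
    (hcols : ∀ j : Fin k, euNorm (fun i => N i j) ≤ t) (c : Fin k → ℝ) :
    euNorm (N *ᵥ c) ≤ t * (Real.sqrt k * euNorm c) := by
  rw [mulVec_eq_sum_cols]
  calc euNorm (∑ j, c j • (fun i => N i j)) ≤ ∑ j, euNorm (c j • (fun i => N i j)) :=
      euNorm_sum_le _ _
    _ = ∑ j, |c j| * euNorm (fun i => N i j) := by simp [euNorm_smul]
    _ ≤ ∑ j, |c j| * t := by
        refine Finset.sum_le_sum fun j _ => ?_
        exact mul_le_mul_of_nonneg_left (hcols j) (abs_nonneg _)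
    _ = t * ∑ j, |c j| := by rw [← Finset.sum_mul]; ring
    _ ≤ t * (Real.sqrt k * euNorm c) :=
        mul_le_mul_of_nonneg_left (abs_sum_le_sqrt c) ht

lemma orth_sub_sq {n : ℕ} (a b : Fin n → ℝ) (h : a ⬝ᵥ b = 0) :
    (b - a) ⬝ᵥ (b - a) = a ⬝ᵥ a + b ⬝ᵥ b := by
  have hc : b ⬝ᵥ a = 0 := by rw [dotProduct_comm]; exact h
  rw [dotProduct_sub, sub_dotProduct, sub_dotProduct, h, hc]; ring

lemma proj_diff_bound {p : ℕ} (P Q : Matrix (Fin p) (Fin p) ℝ)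
    (hPsym : Pᵀ = P) (hQsym : Qᵀ = Q) (hPi : P * P = P) (hQi : Q * Q = Q)
    (T : ℝ) (hT : 0 ≤ T)
    (HA : ∀ x, euNorm (P *ᵥ (x - Q *ᵥ x)) ≤ T * euNorm (x - Q *ᵥ x))
    (HB : ∀ x, euNorm (Q *ᵥ x - P *ᵥ (Q *ᵥ x)) ≤ T * euNorm (Q *ᵥ x)) :
    opNorm (Q - P) ≤ T := by
  apply opNorm_le _ hT
  intro x
  set y1 := P *ᵥ (x - Q *ᵥ x) with hy1
  set y2 := Q *ᵥ x - P *ᵥ (Q *ᵥ x) with hy2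
  have hd : (Q - P) *ᵥ x = y2 - y1 := by
    rw [sub_mulVec, hy2, hy1, mulVec_sub]
    abel
  have hPy2 : P *ᵥ y2 = 0 := by
    have hPPQ : P * (P * Q) = P * Q := by rw [← Matrix.mul_assoc, hPi]
    rw [hy2, mulVec_sub, mulVec_mulVec, mulVec_mulVec, hPPQ, sub_self]
  have horth : y1 ⬝ᵥ y2 = 0 := by
    rw [hy1, dp_adj, hPsym, hPy2, dotProduct_zero]
  have hsq : (y2 - y1) ⬝ᵥ (y2 - y1) = y1 ⬝ᵥ y1 + y2 ⬝ᵥ y2 := orth_sub_sq y1 y2 horth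
  have hA2 : y1 ⬝ᵥ y1 ≤ T ^ 2 * ((x - Q *ᵥ x) ⬝ᵥ (x - Q *ᵥ x)) := by
    have h := HA x
    have := mul_self_le_mul_self (euNorm_nonneg y1) h
    rw [← sq, ← sq] at this
    rw [← euNorm_sq, ← euNorm_sq]
    calc euNorm y1 ^ 2 ≤ (T * euNorm (x - Q *ᵥ x)) ^ 2 := this
      _ = T ^ 2 * euNorm (x - Q *ᵥ x) ^ 2 := by ring
  have hB2 : y2 ⬝ᵥ y2 ≤ T ^ 2 * ((Q *ᵥ x) ⬝ᵥ (Q *ᵥ x)) := by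
    have h := HB x
    have := mul_self_le_mul_self (euNorm_nonneg y2) h
    rw [← sq, ← sq] at this
    rw [← euNorm_sq, ← euNorm_sq]
    calc euNorm y2 ^ 2 ≤ (T * euNorm (Q *ᵥ x)) ^ 2 := this
      _ = T ^ 2 * euNorm (Q *ᵥ x) ^ 2 := by ring
  have hpy := proj_pyth Q hQsym hQi x
  have hfin : ((Q - P) *ᵥ x) ⬝ᵥ ((Q - P) *ᵥ x) ≤ T ^ 2 * (x ⬝ᵥ x) := by
    rw [hd, hsq]
    nlinarith
  exact euNorm_le_of_sq_le_sq _ _ T hT hfin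

lemma eig_col {p : ℕ} (V : Matrix (Fin p) (Fin p) ℝ) (lam : Fin p → ℝ)
    (hV : Vᵀ * V = 1) (j : Fin p) :
    (V * Matrix.diagonal lam * Vᵀ) *ᵥ (fun i => V i j)
      = lam j • (fun i => V i j) := by
  have hc : (fun i => V i j) = V *ᵥ Pi.single j 1 := by
    rw [mulVec_single_one]
    funext i
    simp [Matrix.transpose_apply]
  have hm : (V * Matrix.diagonal lam * Vᵀ) * V = V * Matrix.diagonal lam := by
    rw [Matrix.mul_assoc, hV, Matrix.mul_one]
  rw [hc, mulVec_mulVec, hm, mulVec_single_one]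
  funext i
  simp [Matrix.transpose_apply, Matrix.mul_diagonal, mul_comm]

lemma col_norm_one {p : ℕ} (V : Matrix (Fin p) (Fin p) ℝ) (hV : Vᵀ * V = 1) (j : Fin p) :
    (fun i => V i j) ⬝ᵥ (fun i => V i j) = 1 := by
  have h := congrArg (fun M => M j j) hV
  simpa [Matrix.mul_apply, Matrix.one_apply, dotProduct, Matrix.transpose_apply] using h

lemma euNorm_iso {p k : ℕ} (Wk : Matrix (Fin p) (Fin k) ℝ) (h1 : Wkᵀ * Wk = 1)
    (c : Fin k → ℝ) : euNorm (Wk *ᵥ c) = euNorm c := by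
  rw [euNorm, euNorm]
  congr 1
  rw [dp_adj, mulVec_mulVec, h1, one_mulVec]

lemma div_le_div_of_le_denom {a b c : ℝ} (ha : 0 ≤ a) (hc : 0 < c) (h : c ≤ b) :
    a / b ≤ a / c := by
  rw [div_le_div_iff₀ (lt_of_lt_of_le hc h) hc]
  nlinarith

set_option maxHeartbeats 2000000 in
/-- Davis–Kahan-type projection bound. Let `S` and `Sh` be symmetric `p × p` matrices
with eigendecompositions `S = V diag(λ) Vᵀ` and `Sh = V̂ diag(λ̂) V̂ᵀ` where the
eigenvalues `λ₁ ≥ … ≥ λ_p` and `λ̂₁ ≥ … ≥ λ̂_p` are sorted in descending order.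
Suppose `λ_k > λ_{k+1} = 0` (so `S` has rank `k`).  If `P` and `P̂` are the orthogonal
projections onto the spans of the top-`k` eigenvectors of `S` and `Sh`, then
`‖P̂ - P‖² ≤ 4 k ‖Sh - S‖² / λ_k²`. -/
theorem davis_kahan_projection_bound {p k : ℕ} (hk1 : 1 ≤ k) (hkp : k < p)
    (S Sh V Vh : Matrix (Fin p) (Fin p) ℝ) (lam lamh : Fin p → ℝ)
    (hSsym : Sᵀ = S) (hShsym : Shᵀ = Sh)
    (hV : Vᵀ * V = 1) (hVh : Vhᵀ * Vh = 1)
    (hlam : Antitone lam) (hlamh : Antitone lamh)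
    (hS : S = V * Matrix.diagonal lam * Vᵀ)
    (hSh : Sh = Vh * Matrix.diagonal lamh * Vhᵀ)
    (hgap : 0 < lam ⟨k - 1, by omega⟩) (hzero : lam ⟨k, hkp⟩ = 0)
    (Vk Vhk : Matrix (Fin p) (Fin k) ℝ)
    (hVk : Vk = Matrix.of fun i (j : Fin k) => V i (Fin.castLE hkp.le j))
    (hVhk : Vhk = Matrix.of fun i (j : Fin k) => Vh i (Fin.castLE hkp.le j)) :
    (opNorm (Vhk * Vhkᵀ - Vk * Vkᵀ)) ^ 2
      ≤ 4 * k * (opNorm (Sh - S)) ^ 2 / (lam ⟨k - 1, by omega⟩) ^ 2 := by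
  have hkm1p : k - 1 < p := by omega
  show (opNorm (Vhk * Vhkᵀ - Vk * Vkᵀ)) ^ 2
      ≤ 4 * k * (opNorm (Sh - S)) ^ 2 / (lam ⟨k - 1, hkm1p⟩) ^ 2
  set γ : ℝ := lam ⟨k - 1, hkm1p⟩ with hγdef
  set ε : ℝ := opNorm (Sh - S) with hεdef
  have hε : 0 ≤ ε := opNorm_nonneg' _
  have hγpos : 0 < γ := hgap
  -- inner product perturbation bounds
  have hEdp : ∀ x y : Fin p → ℝ, |x ⬝ᵥ ((Sh - S) *ᵥ y)| ≤ ε * euNorm x * euNorm y := by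
    intro x y
    calc |x ⬝ᵥ ((Sh - S) *ᵥ y)| ≤ euNorm x * euNorm ((Sh - S) *ᵥ y) := dp_cs _ _
      _ ≤ euNorm x * (ε * euNorm y) :=
          mul_le_mul_of_nonneg_left (opNorm_mulVec_le _ y) (euNorm_nonneg x)
      _ = ε * euNorm x * euNorm y := by ring
  have hEdp' : ∀ x y : Fin p → ℝ, |x ⬝ᵥ ((S - Sh) *ᵥ y)| ≤ ε * euNorm x * euNorm y := by
    intro x y
    have hneg : (S - Sh) *ᵥ y = -((Sh - S) *ᵥ y) := by
      rw [← neg_mulVec, neg_sub]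
    rw [hneg, dotProduct_neg, abs_neg]
    exact hEdp x y
  -- quadratic form perturbation bounds
  have hWeylE : ∀ u : Fin p → ℝ, u ⬝ᵥ ((Vh * Matrix.diagonal lamh * Vhᵀ) *ᵥ u)
      ≤ u ⬝ᵥ ((V * Matrix.diagonal lam * Vᵀ) *ᵥ u) + ε * (u ⬝ᵥ u) := by
    intro u
    have h1 : u ⬝ᵥ ((Vh * Matrix.diagonal lamh * Vhᵀ) *ᵥ u)
        - u ⬝ᵥ ((V * Matrix.diagonal lam * Vᵀ) *ᵥ u) = u ⬝ᵥ ((Sh - S) *ᵥ u) := by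
      rw [← hS, ← hSh, sub_mulVec, dotProduct_sub]
    have h2 := le_of_abs_le (hEdp u u)
    have h3 : ε * euNorm u * euNorm u = ε * (u ⬝ᵥ u) := by
      rw [mul_assoc, ← sq, euNorm_sq]
    linarith
  have hWeylE' : ∀ u : Fin p → ℝ, u ⬝ᵥ ((V * Matrix.diagonal lam * Vᵀ) *ᵥ u)
      ≤ u ⬝ᵥ ((Vh * Matrix.diagonal lamh * Vhᵀ) *ᵥ u) + ε * (u ⬝ᵥ u) := by
    intro u
    have h1 : u ⬝ᵥ ((V * Matrix.diagonal lam * Vᵀ) *ᵥ u)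
        - u ⬝ᵥ ((Vh * Matrix.diagonal lamh * Vhᵀ) *ᵥ u) = u ⬝ᵥ ((S - Sh) *ᵥ u) := by
      rw [← hS, ← hSh, sub_mulVec, dotProduct_sub]
    have h2 := le_of_abs_le (hEdp' u u)
    have h3 : ε * euNorm u * euNorm u = ε * (u ⬝ᵥ u) := by
      rw [mul_assoc, ← sq, euNorm_sq]
    linarith
  -- Weyl inequalities
  have hW1 : lamh ⟨k, hkp⟩ ≤ ε := by
    have h := weyl_upper V Vh lam lamh hV hVh hlam hlamh ε hWeylE ⟨k, hkp⟩
    rwa [hzero, zero_add] at h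
  have hW2 : γ ≤ lamh ⟨k - 1, hkm1p⟩ + ε :=
    weyl_upper Vh V lamh lam hVh hV hlamh hlam ε hWeylE' ⟨k - 1, hkm1p⟩
  -- projections
  set P : Matrix (Fin p) (Fin p) ℝ := Vk * Vkᵀ with hPdef
  set Q : Matrix (Fin p) (Fin p) ℝ := Vhk * Vhkᵀ with hQdef
  have hPsym : Pᵀ = P := by rw [hPdef, Matrix.transpose_mul, Matrix.transpose_transpose]
  have hQsym : Qᵀ = Q := by rw [hQdef, Matrix.transpose_mul, Matrix.transpose_transpose]
  have hPi : P * P = P := hQidem hkp V Vk hV hVk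
  have hQi : Q * Q = Q := hQidem hkp Vh Vhk hVh hVhk
  have hγsqpos : (0:ℝ) < γ ^ 2 := pow_pos hγpos 2
  have hk1' : (1:ℝ) ≤ (k:ℝ) := by exact_mod_cast hk1
  rcases le_or_gt γ (2 * ε) with hcase | hcase
  · -- large-perturbation case : trivial bound ‖Q - P‖ ≤ 1
    have hO : opNorm (Q - P) ≤ 1 := by
      refine proj_diff_bound P Q hPsym hQsym hPi hQi 1 zero_le_one ?_ ?_
      · intro x
        rw [one_mul]
        exact proj_contract1 P hPsym hPi _
      · intro x
        rw [one_mul]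
        exact proj_contract2 P hPsym hPi (Q *ᵥ x)
    have h0 : 0 ≤ opNorm (Q - P) := opNorm_nonneg' _
    rw [le_div_iff₀ hγsqpos]
    have e1 : opNorm (Q - P) ^ 2 ≤ 1 := by nlinarith
    have e2 : γ ^ 2 ≤ 4 * ε ^ 2 := by nlinarith
    have e3 : (0:ℝ) ≤ ε ^ 2 := sq_nonneg ε
    nlinarith [mul_nonneg (sub_nonneg.mpr hk1') e3]
  · -- main case
    have hgapε : γ / 2 ≤ γ - ε := by linarith
    have hhalfpos : 0 < γ / 2 := by linarith
    set τ : ℝ := ε / (γ / 2) with hτdef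
    have hτnn : 0 ≤ τ := div_nonneg hε hhalfpos.le
    -- column bounds, family 1 : columns of V against the projection Q
    have hfam1 : ∀ j : Fin k,
        euNorm ((fun i => V i (Fin.castLE hkp.le j)) - Q *ᵥ (fun i => V i (Fin.castLE hkp.le j)))
          ≤ τ := by
      intro j
      have heig : S *ᵥ (fun i => V i (Fin.castLE hkp.le j))
          = lam (Fin.castLE hkp.le j) • (fun i => V i (Fin.castLE hkp.le j)) := by
        rw [hS]; exact eig_col V lam hV _
      have hv1 : (fun i => V i (Fin.castLE hkp.le j)) ⬝ᵥ (fun i => V i (Fin.castLE hkp.le j))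
          = 1 := col_norm_one V hV _
      have hnu : ∀ i : Fin p, k ≤ (i : ℕ) → lamh i ≤ ε := by
        intro i hi
        have := hlamh (show (⟨k, hkp⟩ : Fin p) ≤ i by rw [Fin.le_def]; exact hi)
        linarith
      have hEb : ∀ x y : Fin p → ℝ,
          |x ⬝ᵥ ((S - Vh * Matrix.diagonal lamh * Vhᵀ) *ᵥ y)| ≤ ε * euNorm x * euNorm y := by
        rw [← hSh]; exact hEdp'
      have hlow : γ ≤ lam (Fin.castLE hkp.le j) := by
        apply hlam
        rw [Fin.le_def]
        simp only [Fin.coe_castLE]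
        omega
      have hpos : 0 < lam (Fin.castLE hkp.le j) - ε := by linarith
      have hcb := col_bound hkp Vh lamh hVh Vhk hVhk S _ (lam (Fin.castLE hkp.le j))
        heig hv1 ε ε hε hnu hEb hpos
      refine le_trans hcb ?_
      exact div_le_div_of_le_denom hε hhalfpos (by linarith)
    -- column bounds, family 2 : columns of Vh against the projection P
    have hfam2 : ∀ j : Fin k,
        euNorm ((fun i => Vh i (Fin.castLE hkp.le j)) - P *ᵥ (fun i => Vh i (Fin.castLE hkp.le j)))
          ≤ τ := by
      intro j
      have heig : Sh *ᵥ (fun i => Vh i (Fin.castLE hkp.le j))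
          = lamh (Fin.castLE hkp.le j) • (fun i => Vh i (Fin.castLE hkp.le j)) := by
        rw [hSh]; exact eig_col Vh lamh hVh _
      have hv1 : (fun i => Vh i (Fin.castLE hkp.le j)) ⬝ᵥ (fun i => Vh i (Fin.castLE hkp.le j))
          = 1 := col_norm_one Vh hVh _
      have hnu : ∀ i : Fin p, k ≤ (i : ℕ) → lam i ≤ 0 := by
        intro i hi
        have := hlam (show (⟨k, hkp⟩ : Fin p) ≤ i by rw [Fin.le_def]; exact hi)
        rw [hzero] at this
        exact this
      have hEb : ∀ x y : Fin p → ℝ,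
          |x ⬝ᵥ ((Sh - V * Matrix.diagonal lam * Vᵀ) *ᵥ y)| ≤ ε * euNorm x * euNorm y := by
        rw [← hS]; exact hEdp
      have hlow : lamh ⟨k - 1, hkm1p⟩ ≤ lamh (Fin.castLE hkp.le j) := by
        apply hlamh
        rw [Fin.le_def]
        simp only [Fin.coe_castLE]
        omega
      have hpos : 0 < lamh (Fin.castLE hkp.le j) - 0 := by
        have : γ - ε ≤ lamh (Fin.castLE hkp.le j) := by linarith
        linarith
      have hcb := col_bound hkp V lam hV Vk hVk Sh _ (lamh (Fin.castLE hkp.le j))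
        heig hv1 0 ε hε hnu hEb hpos
      refine le_trans hcb ?_
      apply div_le_div_of_le_denom hε hhalfpos
      have : γ - ε ≤ lamh (Fin.castLE hkp.le j) := by linarith
      linarith
    set T : ℝ := Real.sqrt k * τ with hTdef
    have hT : 0 ≤ T := mul_nonneg (Real.sqrt_nonneg _) hτnn
    -- the tilted projection bound (A)
    have hG : ∀ x, euNorm (P *ᵥ (x - Q *ᵥ x)) ≤ T * euNorm x := by
      intro x
      have hPx : P *ᵥ (x - Q *ᵥ x) = Vk *ᵥ (Vkᵀ *ᵥ (x - Q *ᵥ x)) := by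
        rw [mulVec_mulVec]
      rw [hPx, euNorm_iso Vk (hWkWk hkp V Vk hV hVk)]
      apply euNorm_le_of_sq_le_sq _ _ _ hT
      have hcomp : ∀ j : Fin k, (Vkᵀ *ᵥ (x - Q *ᵥ x)) j
          = ((fun i => V i (Fin.castLE hkp.le j)) - Q *ᵥ (fun i => V i (Fin.castLE hkp.le j)))
              ⬝ᵥ x := by
        intro j
        have hcolVk : (fun i => Vk i j) = (fun i => V i (Fin.castLE hkp.le j)) := by
          funext i; rw [hVk]; rfl
        have h1 : (Vkᵀ *ᵥ (x - Q *ᵥ x)) j = (fun i => Vk i j) ⬝ᵥ (x - Q *ᵥ x) := by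
          simp [Matrix.mulVec, Matrix.transpose_apply, dotProduct]
        rw [h1, hcolVk]
        set v := fun i => V i (Fin.castLE hkp.le j)
        have h2 : v ⬝ᵥ (Q *ᵥ x) = (Q *ᵥ v) ⬝ᵥ x := by
          rw [dotProduct_comm, dp_adj, hQsym, dotProduct_comm]
        rw [dotProduct_sub, sub_dotProduct, h2]
      have hsum : (Vkᵀ *ᵥ (x - Q *ᵥ x)) ⬝ᵥ (Vkᵀ *ᵥ (x - Q *ᵥ x))
          = ∑ j, ((Vkᵀ *ᵥ (x - Q *ᵥ x)) j) ^ 2 := by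
        simp [dotProduct, sq]
      rw [hsum]
      have hterm : ∀ j : Fin k, ((Vkᵀ *ᵥ (x - Q *ᵥ x)) j) ^ 2 ≤ (τ * euNorm x) ^ 2 := by
        intro j
        rw [hcomp j]
        set w := (fun i => V i (Fin.castLE hkp.le j))
          - Q *ᵥ (fun i => V i (Fin.castLE hkp.le j)) with hwdef
        have h3 : |w ⬝ᵥ x| ≤ τ * euNorm x := by
          calc |w ⬝ᵥ x| ≤ euNorm w * euNorm x := dp_cs _ _
            _ ≤ τ * euNorm x := mul_le_mul_of_nonneg_right (hfam1 j) (euNorm_nonneg x)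
        have habs := abs_le.mp h3
        exact sq_le_sq' habs.1 habs.2
      calc (∑ j, ((Vkᵀ *ᵥ (x - Q *ᵥ x)) j) ^ 2) ≤ ∑ _j : Fin k, (τ * euNorm x) ^ 2 :=
          Finset.sum_le_sum fun j _ => hterm j
        _ = (k : ℝ) * (τ * euNorm x) ^ 2 := by
            rw [Finset.sum_const, Finset.card_univ, Fintype.card_fin, nsmul_eq_mul]
        _ = T ^ 2 * (x ⬝ᵥ x) := by
            rw [hTdef, mul_pow, mul_pow, Real.sq_sqrt (Nat.cast_nonneg k), euNorm_sq]
            ring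
    have HA : ∀ x, euNorm (P *ᵥ (x - Q *ᵥ x)) ≤ T * euNorm (x - Q *ᵥ x) := by
      intro x
      have h0 : Q *ᵥ (x - Q *ᵥ x) = 0 := by
        rw [mulVec_sub, mulVec_mulVec, hQi, sub_self]
      have h1 := hG (x - Q *ᵥ x)
      rwa [h0, sub_zero] at h1
    have HB : ∀ x, euNorm (Q *ᵥ x - P *ᵥ (Q *ᵥ x)) ≤ T * euNorm (Q *ᵥ x) := by
      intro x
      have hmat : Q - P * Q = (Vhk - P * Vhk) * Vhkᵀ := by
        rw [Matrix.sub_mul, hQdef, hPdef]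
        simp only [Matrix.mul_assoc]
      have hN : Q *ᵥ x - P *ᵥ (Q *ᵥ x) = (Vhk - P * Vhk) *ᵥ (Vhkᵀ *ᵥ x) := by
        rw [mulVec_mulVec, mulVec_mulVec, ← hmat, sub_mulVec]
      rw [hN]
      have hcols : ∀ j : Fin k, euNorm (fun i => (Vhk - P * Vhk) i j) ≤ τ := by
        intro j
        have hcol : (fun i => (Vhk - P * Vhk) i j)
            = (fun i => Vh i (Fin.castLE hkp.le j))
              - P *ᵥ (fun i => Vh i (Fin.castLE hkp.le j)) := by
          funext i
          simp only [Matrix.sub_apply, Pi.sub_apply]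
          congr 1
          · rw [hVhk]; rfl
          · simp [Matrix.mul_apply, Matrix.mulVec, dotProduct, hVhk]
        rw [hcol]
        exact hfam2 j
      have h1 := colsum_bound _ τ hτnn hcols (Vhkᵀ *ᵥ x)
      have h2 : euNorm (Vhkᵀ *ᵥ x) = euNorm (Q *ᵥ x) := by
        rw [euNorm, euNorm]
        congr 1
        calc (Vhkᵀ *ᵥ x) ⬝ᵥ (Vhkᵀ *ᵥ x) = x ⬝ᵥ ((Vhkᵀ)ᵀ *ᵥ (Vhkᵀ *ᵥ x)) := dp_adj _ _ _
          _ = x ⬝ᵥ (Q *ᵥ x) := by rw [Matrix.transpose_transpose, mulVec_mulVec, ← hQdef]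
          _ = (Q *ᵥ x) ⬝ᵥ (Q *ᵥ x) := (proj_key Q hQsym hQi x).symm
      rw [h2] at h1
      calc euNorm ((Vhk - P * Vhk) *ᵥ (Vhkᵀ *ᵥ x)) ≤ τ * (Real.sqrt k * euNorm (Q *ᵥ x)) := h1
        _ = T * euNorm (Q *ᵥ x) := by rw [hTdef]; ring
    have hO : opNorm (Q - P) ≤ T := proj_diff_bound P Q hPsym hQsym hPi hQi T hT HA HB
    have h0 : 0 ≤ opNorm (Q - P) := opNorm_nonneg' _
    have hfinal : opNorm (Q - P) ^ 2 ≤ T ^ 2 := by nlinarith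
    have hT2 : T ^ 2 = 4 * (k : ℝ) * ε ^ 2 / γ ^ 2 := by
      rw [hTdef, hτdef, mul_pow, Real.sq_sqrt (Nat.cast_nonneg k), div_pow]
      field_simp
      ring
    rw [← hT2]
    exact hfinal
end

section
/- Let C be an n×n symmetric matrix with entries C(i,j) = c(i−j) where |c(t)| ≤ K·(1+|t|)^{2H−2} for some constant K and H ∈ (1/2, 1). Then the operator norm satisfies ‖C‖ ≤ K'·n^{(2H−1)∨(1/2)}·(1 + log(n)·1_{H=3/4}) for some constant K' depending only on K and H. -/
open Matrix

lemma aux_sum_rpow_le {p : ℝ} (hp0 : 0 < p) (hp1 : p ≤ 1) :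
    ∀ m : ℕ, ∑ t ∈ Finset.range m, ((t : ℝ) + 1) ^ (p - 1) ≤ (m : ℝ) ^ p / p := by
  intro m
  induction m with
  | zero => simp [Real.zero_rpow hp0.ne']
  | succ m ih =>
    rw [Finset.sum_range_succ]
    set t : ℝ := (m : ℝ) + 1 with htdef
    have ht1 : (1 : ℝ) ≤ t := by simp [htdef]
    have ht0 : (0 : ℝ) < t := by linarith
    have hb := rpow_one_add_le_one_add_mul_self (s := -(1 / t))
      (by have : (1:ℝ)/t ≤ 1 := by rw [div_le_one ht0]; linarith
          linarith) hp0.le hp1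
    have h1 : 1 + -(1 / t) = (m : ℝ) / t := by
      field_simp
      simp [htdef]
    rw [h1] at hb
    -- hb : ((m:ℝ)/t)^p ≤ 1 + p * -(1/t)
    have hmul := mul_le_mul_of_nonneg_right hb (Real.rpow_nonneg ht0.le p)
    have hL : ((m : ℝ) / t) ^ p * t ^ p = (m : ℝ) ^ p := by
      rw [Real.div_rpow (Nat.cast_nonneg m) ht0.le]
      field_simp
    have hR : (1 + p * -(1 / t)) * t ^ p = t ^ p - p * t ^ (p - 1) := by
      rw [Real.rpow_sub_one ht0.ne']
      field_simp
      ring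
    rw [hL, hR] at hmul
    -- hmul : (m:ℝ)^p ≤ t^p - p * t^(p-1)
    have key : (m : ℝ) ^ p / p + t ^ (p - 1) ≤ t ^ p / p := by
      rw [div_add' _ _ _ hp0.ne', div_le_div_iff₀ hp0 hp0]
      nlinarith
    push_cast
    calc ∑ t ∈ Finset.range m, ((t : ℝ) + 1) ^ (p - 1) + ((m : ℝ) + 1) ^ (p - 1)
        ≤ (m : ℝ) ^ p / p + t ^ (p - 1) := by gcongr
      _ ≤ t ^ p / p := key

lemma aux_reindex {n : ℕ} (g : ℕ → ℝ) (hg : ∀ t, 0 ≤ g t) (i : Fin n) :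
    ∑ j : Fin n, g ((i : ℤ) - (j : ℤ)).natAbs ≤ 2 * ∑ t ∈ Finset.range n, g t := by
  classical
  have main : ∀ S : Finset (Fin n), ∀ e : Fin n → ℕ,
      (∀ j ∈ S, ((i : ℤ) - (j : ℤ)).natAbs = e j) →
      (∀ j ∈ S, e j < n) →
      (∀ a ∈ S, ∀ b ∈ S, e a = e b → a = b) →
      ∑ j ∈ S, g ((i : ℤ) - (j : ℤ)).natAbs ≤ ∑ t ∈ Finset.range n, g t := by
    intro S e he hlt hinj
    rw [Finset.sum_congr rfl (fun j hj => by rw [he j hj])]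
    rw [← Finset.sum_image (f := g) (g := e) hinj]
    apply Finset.sum_le_sum_of_subset_of_nonneg
    · intro t ht
      rw [Finset.mem_image] at ht
      obtain ⟨j, hj, rfl⟩ := ht
      exact Finset.mem_range.2 (hlt j hj)
    · intro t _ _
      exact hg t
  have hsplit := Finset.sum_filter_add_sum_filter_not Finset.univ
    (fun j : Fin n => (j : ℕ) ≤ (i : ℕ)) (fun j : Fin n => g ((i : ℤ) - (j : ℤ)).natAbs)
  have h1 := main (Finset.univ.filter (fun j : Fin n => (j : ℕ) ≤ (i : ℕ)))
    (fun j => (i : ℕ) - (j : ℕ))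
    (fun j hj => by simp only [Finset.mem_filter] at hj; beta_reduce; omega)
    (fun j hj => by beta_reduce; omega)
    (fun a ha b hb hab => by
      simp only [Finset.mem_filter] at ha hb
      beta_reduce at hab
      exact Fin.ext (by omega))
  have h2 := main (Finset.univ.filter (fun j : Fin n => ¬ (j : ℕ) ≤ (i : ℕ)))
    (fun j => (j : ℕ) - (i : ℕ))
    (fun j hj => by simp only [Finset.mem_filter] at hj; beta_reduce; omega)
    (fun j hj => by beta_reduce; omega)
    (fun a ha b hb hab => by
      simp only [Finset.mem_filter] at ha hb
      beta_reduce at hab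
      exact Fin.ext (by omega))
  rw [← hsplit]
  linarith

/-- For a symmetric Toeplitz matrix `C(i,j) = c(i-j)` with
`|c(t)| ≤ K (1+|t|)^{2H-2}` for some `H ∈ (1/2,1)`, the operator norm satisfies
`‖C‖ ≤ K' n^{(2H-1) ∨ 1/2} (1 + log(n) 1_{H=3/4})` for a constant `K' = K'(K,H)`. -/
theorem toeplitz_lrd_opNorm_bound (K H : ℝ) (hK : 0 < K)
    (hH : H ∈ Set.Ioo (1 / 2 : ℝ) 1) (c : ℤ → ℝ)
    (hsym : ∀ t : ℤ, c (-t) = c t)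
    (hc : ∀ t : ℤ, |c t| ≤ K * (1 + |(t : ℝ)|) ^ (2 * H - 2)) :
    ∃ K' > (0 : ℝ), ∀ n : ℕ, 1 ≤ n → ∀ Cm : Matrix (Fin n) (Fin n) ℝ,
      (∀ i j : Fin n, Cm i j = c ((i : ℤ) - (j : ℤ))) →
      opNorm Cm ≤ K' * (n : ℝ) ^ (max (2 * H - 1) (1 / 2 : ℝ))
          * (1 + (if H = 3 / 4 then Real.log n else 0)) := by
  obtain ⟨hH1, hH2⟩ := hH
  set p : ℝ := 2 * H - 1 with hpdef
  have hp0 : 0 < p := by rw [hpdef]; linarith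
  have hp1 : p ≤ 1 := by rw [hpdef]; linarith
  refine ⟨2 * K / p + 1, by positivity, ?_⟩
  intro n hn Cm hCm
  have hn1 : (1 : ℝ) ≤ (n : ℝ) := by exact_mod_cast hn
  set R : ℝ := 2 * K / p * (n : ℝ) ^ p with hRdef
  have hR0 : 0 ≤ R := by positivity
  -- entrywise bound
  have hentry : ∀ i j : Fin n,
      |Cm i j| ≤ K * ((((i : ℤ) - (j : ℤ)).natAbs : ℝ) + 1) ^ (p - 1) := by
    intro i j
    rw [hCm i j]
    have hexp : 2 * H - 2 = p - 1 := by rw [hpdef]; ring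
    have hnat : (1 : ℝ) + |((((i : ℤ) - (j : ℤ)) : ℤ) : ℝ)|
        = (((i : ℤ) - (j : ℤ)).natAbs : ℝ) + 1 := by
      rw [Nat.cast_natAbs]
      push_cast
      ring
    calc |c ((i : ℤ) - (j : ℤ))|
        ≤ K * (1 + |((((i : ℤ) - (j : ℤ)) : ℤ) : ℝ)|) ^ (2 * H - 2) := hc _
      _ = K * ((((i : ℤ) - (j : ℤ)).natAbs : ℝ) + 1) ^ (p - 1) := by
          rw [hnat, hexp]
  -- row sum bound
  have hrow : ∀ i : Fin n,
      ∑ j : Fin n, K * ((((i : ℤ) - (j : ℤ)).natAbs : ℝ) + 1) ^ (p - 1) ≤ R := by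
    intro i
    rw [← Finset.mul_sum]
    have h1 := aux_reindex (fun t => ((t : ℝ) + 1) ^ (p - 1))
      (fun t => by positivity) i
    have h2 := aux_sum_rpow_le hp0 hp1 n
    calc K * ∑ j : Fin n, ((((i : ℤ) - (j : ℤ)).natAbs : ℝ) + 1) ^ (p - 1)
        ≤ K * (2 * ((n : ℝ) ^ p / p)) := by
          apply mul_le_mul_of_nonneg_left _ hK.le
          calc ∑ j : Fin n, ((((i : ℤ) - (j : ℤ)).natAbs : ℝ) + 1) ^ (p - 1)
              ≤ 2 * ∑ t ∈ Finset.range n, ((t : ℝ) + 1) ^ (p - 1) := h1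
            _ ≤ 2 * ((n : ℝ) ^ p / p) := by linarith
      _ = R := by rw [hRdef]; ring
  have hrowC : ∀ i : Fin n, ∑ j : Fin n, |Cm i j| ≤ R := fun i =>
    le_trans (Finset.sum_le_sum fun j _ => hentry i j) (hrow i)
  have hcolC : ∀ j : Fin n, ∑ i : Fin n, |Cm i j| ≤ R := by
    intro j
    calc ∑ i : Fin n, |Cm i j|
        ≤ ∑ i : Fin n, K * ((((j : ℤ) - (i : ℤ)).natAbs : ℝ) + 1) ^ (p - 1) := by
          apply Finset.sum_le_sum
          intro i _
          have h := hentry i j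
          rwa [show ((i : ℤ) - (j : ℤ)).natAbs = ((j : ℤ) - (i : ℤ)).natAbs by omega] at h
      _ ≤ R := hrow j
  -- operator norm bound
  have hop : opNorm Cm ≤ R := by
    rw [opNorm]
    apply ContinuousLinearMap.opNorm_le_bound _ hR0
    intro x
    simp only [LinearMap.coe_toContinuousLinearMap']
    set y : EuclideanSpace ℝ (Fin n) := Matrix.toEuclideanLin Cm x with hydef
    have hTx : ∀ i : Fin n, y i = ∑ j : Fin n, Cm i j * x j := by
      intro i
      simp [hydef, Matrix.toEuclideanLin_apply, Matrix.mulVec, dotProduct]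
    have hnx : ‖x‖ ^ 2 = ∑ j : Fin n, (x j) ^ 2 := by
      rw [EuclideanSpace.norm_eq, Real.sq_sqrt (by positivity)]
      simp [Real.norm_eq_abs, sq_abs]
    have hny : ‖y‖ ^ 2 = ∑ i : Fin n, (y i) ^ 2 := by
      rw [EuclideanSpace.norm_eq, Real.sq_sqrt (by positivity)]
      simp [Real.norm_eq_abs, sq_abs]
    have hy2 : ‖y‖ ^ 2 ≤ (R * ‖x‖) ^ 2 := by
      rw [hny, mul_pow, hnx]
      calc ∑ i : Fin n, (y i) ^ 2
          = ∑ i : Fin n, (∑ j : Fin n, Cm i j * x j) ^ 2 := by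
            exact Finset.sum_congr rfl fun i _ => by rw [hTx i]
        _ ≤ ∑ i : Fin n, (∑ j : Fin n, |Cm i j| * |x j|) ^ 2 := by
            apply Finset.sum_le_sum
            intro i _
            have h1 : |∑ j : Fin n, Cm i j * x j| ≤ ∑ j : Fin n, |Cm i j| * |x j| := by
              calc |∑ j : Fin n, Cm i j * x j| ≤ ∑ j : Fin n, |Cm i j * x j| :=
                    Finset.abs_sum_le_sum_abs _ _
                _ = ∑ j : Fin n, |Cm i j| * |x j| := by simp [abs_mul]
            calc (∑ j : Fin n, Cm i j * x j) ^ 2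
                = |∑ j : Fin n, Cm i j * x j| ^ 2 := (sq_abs _).symm
              _ ≤ (∑ j : Fin n, |Cm i j| * |x j|) ^ 2 :=
                  pow_le_pow_left₀ (abs_nonneg _) h1 2
        _ ≤ ∑ i : Fin n, (∑ j : Fin n, |Cm i j|) * (∑ j : Fin n, |Cm i j| * (x j) ^ 2) := by
            apply Finset.sum_le_sum
            intro i _
            apply Finset.sum_sq_le_sum_mul_sum_of_sq_eq_mul
            · intro j _; exact abs_nonneg _
            · intro j _; positivity
            · intro j _
              simp only [mul_pow, sq_abs]
              rw [← mul_assoc, abs_mul_abs_self]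
              ring
        _ ≤ ∑ i : Fin n, R * (∑ j : Fin n, |Cm i j| * (x j) ^ 2) := by
            apply Finset.sum_le_sum
            intro i _
            exact mul_le_mul_of_nonneg_right (hrowC i)
              (Finset.sum_nonneg fun j _ => by positivity)
        _ = R * ∑ j : Fin n, (∑ i : Fin n, |Cm i j|) * (x j) ^ 2 := by
            rw [← Finset.mul_sum]
            congr 1
            rw [Finset.sum_comm]
            exact Finset.sum_congr rfl fun j _ => (Finset.sum_mul _ _ _).symm
        _ ≤ R * ∑ j : Fin n, R * (x j) ^ 2 := by
            apply mul_le_mul_of_nonneg_left _ hR0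
            apply Finset.sum_le_sum
            intro j _
            exact mul_le_mul_of_nonneg_right (hcolC j) (sq_nonneg _)
        _ = R ^ 2 * ∑ j : Fin n, (x j) ^ 2 := by rw [← Finset.mul_sum]; ring
    have h := Real.sqrt_le_sqrt hy2
    rwa [Real.sqrt_sq (norm_nonneg _), Real.sqrt_sq (by positivity)] at h
  -- conclude
  have hpow0 : (0 : ℝ) ≤ (n : ℝ) ^ (max p (1 / 2 : ℝ)) := Real.rpow_nonneg (by positivity) _
  set e : ℝ := (if H = 3 / 4 then Real.log n else 0) with hedef
  have hite : 0 ≤ e := by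
    rw [hedef]
    split
    · exact Real.log_nonneg hn1
    · exact le_rfl
  have hq : 0 ≤ 2 * K / p := by positivity
  calc opNorm Cm ≤ R := hop
    _ ≤ 2 * K / p * (n : ℝ) ^ (max p (1 / 2 : ℝ)) := by
        rw [hRdef]
        apply mul_le_mul_of_nonneg_left _ (by positivity)
        exact Real.rpow_le_rpow_of_exponent_le hn1 (le_max_left _ _)
    _ ≤ (2 * K / p + 1) * (n : ℝ) ^ (max p (1 / 2 : ℝ))
          * (1 + e) := by
        nlinarith [mul_nonneg (mul_nonneg hq hpow0) hite, mul_nonneg hpow0 hite, hpow0, hite, hq]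
end
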